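/- Let Ω ⊆ ℝⁿ be a nonempty closed convex set, F : ℝⁿ → ℝⁿ continuous and monotone on Ω, and let φ : ℝⁿ → ℝ ∪ {+∞} be convex with effective domain Ω and continuous on Ω, with 0 ∈ ri(dom ∂φ − Ω). Suppose x̄ ∈ S_φ and λ̄ ≥ 0 satisfy the Lagrangian optimality condition 0 ∈ ∂φ(x̄) + λ̄ ∂G(x̄) + N_Ω(x̄). If λ̄ = 0, then S₀ ∩ S_ε = S_φ for every ε > 0. If λ̄ > 0 and in addition S₀ is nonempty and closed, 0 ∈ ri(dom ∂φ − S₀), and F is coercive with respect to Ω, then S_φ = S₀ ∩ S_{Gεφ} for all ε ∈ (0, 1/λ̄]. -/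

import Mathlib

open Set Pointwise
open scoped InnerProductSpace

/-- The dual gap function `G(x) = sup_{y ∈ Ω} ⟨F(y), x − y⟩`, valued in `EReal`. -/
noncomputable def dualGap {n : ℕ} (Ω : Set (EuclideanSpace ℝ (Fin n)))
    (F : EuclideanSpace ℝ (Fin n) → EuclideanSpace ℝ (Fin n))
    (x : EuclideanSpace ℝ (Fin n)) : EReal :=
  ⨆ y ∈ Ω, ((⟪F y, x - y⟫_ℝ : ℝ) : EReal)

/-- The (convex) subdifferential of φ (viewed as the extended function equal to φ on
Ω and +∞ outside of Ω, so that its effective domain is Ω). -/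
def subdiffOn {n : ℕ} (Ω : Set (EuclideanSpace ℝ (Fin n)))
    (φ : EuclideanSpace ℝ (Fin n) → ℝ) (x : EuclideanSpace ℝ (Fin n)) :
    Set (EuclideanSpace ℝ (Fin n)) :=
  {v | x ∈ Ω ∧ ∀ y ∈ Ω, φ x + ⟪v, y - x⟫_ℝ ≤ φ y}

/-- The subdifferential of the (EReal-valued) dual gap function G. -/
noncomputable def subdiffG {n : ℕ} (Ω : Set (EuclideanSpace ℝ (Fin n)))
    (F : EuclideanSpace ℝ (Fin n) → EuclideanSpace ℝ (Fin n))
    (x : EuclideanSpace ℝ (Fin n)) : Set (EuclideanSpace ℝ (Fin n)) :=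
  {w | ∀ y, dualGap Ω F x + ((⟪w, y - x⟫_ℝ : ℝ) : EReal) ≤ dualGap Ω F y}

/-- The normal cone to Ω at x̄. -/
def normalCone {n : ℕ} (Ω : Set (EuclideanSpace ℝ (Fin n)))
    (x : EuclideanSpace ℝ (Fin n)) : Set (EuclideanSpace ℝ (Fin n)) :=
  {v | ∀ z ∈ Ω, ⟪v, z - x⟫_ℝ ≤ 0}

lemma gap_nonneg {n : ℕ} {Ω : Set (EuclideanSpace ℝ (Fin n))}
    {F : EuclideanSpace ℝ (Fin n) → EuclideanSpace ℝ (Fin n)}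
    {x : EuclideanSpace ℝ (Fin n)} (hx : x ∈ Ω) : (0 : EReal) ≤ dualGap Ω F x := by
  have h : ((⟪F x, x - x⟫_ℝ : ℝ) : EReal) ≤ dualGap Ω F x := le_iSup₂_of_le x hx le_rfl
  simpa using h

lemma gap_zero {n : ℕ} {Ω : Set (EuclideanSpace ℝ (Fin n))}
    {F : EuclideanSpace ℝ (Fin n) → EuclideanSpace ℝ (Fin n)}
    (hFmono : ∀ x ∈ Ω, ∀ y ∈ Ω, 0 ≤ ⟪F x - F y, x - y⟫_ℝ)
    {x : EuclideanSpace ℝ (Fin n)} (hx : x ∈ Ω)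
    (hsol : ∀ y ∈ Ω, 0 ≤ ⟪F x, y - x⟫_ℝ) : dualGap Ω F x = 0 := by
  refine le_antisymm (iSup₂_le fun y hy => ?_) (gap_nonneg hx)
  have h1 := hFmono y hy x hx
  have h2 := hsol y hy
  have h3 : ⟪F y, x - y⟫_ℝ ≤ 0 := by
    simp only [inner_sub_left, inner_sub_right] at h1 h2 ⊢
    linarith [real_inner_comm (F y) x, real_inner_comm (F y) y,
      real_inner_comm (F x) x, real_inner_comm (F x) y]
  exact_mod_cast EReal.coe_nonpos.mpr h3

/-- if x̄ ∈ S_φ and λ̄ ≥ 0 satisfy the Lagrangian optimality condition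
0 ∈ ∂φ(x̄) + λ̄ ∂G(x̄) + N_Ω(x̄), then: if λ̄ = 0, S₀ ∩ S_ε = S_φ for every ε > 0;
if λ̄ > 0 and in addition S₀ is nonempty and closed, 0 ∈ ri(dom ∂φ − S₀) and F is
coercive w.r.t. Ω, then S_φ = S₀ ∩ S_{Gεφ} for all ε ∈ (0, 1/λ̄]. -/
theorem lagrange_multiplier_exact_regularization {n : ℕ}
    (Ω : Set (EuclideanSpace ℝ (Fin n)))
    (hne : Ω.Nonempty) (hcl : IsClosed Ω) (hconv : Convex ℝ Ω)
    (F : EuclideanSpace ℝ (Fin n) → EuclideanSpace ℝ (Fin n))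
    (hFcont : ContinuousOn F Ω)
    (hFmono : ∀ x ∈ Ω, ∀ y ∈ Ω, 0 ≤ ⟪F x - F y, x - y⟫_ℝ)
    (φ : EuclideanSpace ℝ (Fin n) → ℝ)
    (hφconv : ConvexOn ℝ Ω φ) (hφcont : ContinuousOn φ Ω)
    (hri : (0 : EuclideanSpace ℝ (Fin n)) ∈
      intrinsicInterior ℝ ({x | (subdiffOn Ω φ x).Nonempty} - Ω))
    (xbar : EuclideanSpace ℝ (Fin n)) (lam : ℝ) (hlam : 0 ≤ lam)
    -- x̄ ∈ S_φ
    (hxbar : (xbar ∈ Ω ∧ ∀ y ∈ Ω, 0 ≤ ⟪F xbar, y - xbar⟫_ℝ) ∧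
      ∃ v ∈ subdiffOn Ω φ xbar,
        ∀ z, (z ∈ Ω ∧ ∀ y ∈ Ω, 0 ≤ ⟪F z, y - z⟫_ℝ) → 0 ≤ ⟪v, z - xbar⟫_ℝ)
    -- Lagrangian optimality: 0 ∈ ∂φ(x̄) + λ̄ ∂G(x̄) + N_Ω(x̄)
    (hlagrange : ∃ a ∈ subdiffOn Ω φ xbar, ∃ b ∈ subdiffG Ω F xbar,
      ∃ c ∈ normalCone Ω xbar, a + lam • b + c = 0) :
    (lam = 0 → ∀ ε : ℝ, 0 < ε →
      ({x | x ∈ Ω ∧ ∀ y ∈ Ω, 0 ≤ ⟪F x, y - x⟫_ℝ} ∩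
        {x | x ∈ Ω ∧ ∃ v ∈ subdiffOn Ω φ x,
          ∀ z ∈ Ω, 0 ≤ ⟪F x + ε • v, z - x⟫_ℝ}) =
      {x | (x ∈ Ω ∧ ∀ y ∈ Ω, 0 ≤ ⟪F x, y - x⟫_ℝ) ∧
        ∃ v ∈ subdiffOn Ω φ x,
          ∀ z, (z ∈ Ω ∧ ∀ y ∈ Ω, 0 ≤ ⟪F z, y - z⟫_ℝ) → 0 ≤ ⟪v, z - x⟫_ℝ}) ∧
    (0 < lam →
      ({x | x ∈ Ω ∧ ∀ y ∈ Ω, 0 ≤ ⟪F x, y - x⟫_ℝ}).Nonempty →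
      IsClosed {x : (EuclideanSpace ℝ (Fin n)) |
        x ∈ Ω ∧ ∀ y ∈ Ω, 0 ≤ ⟪F x, y - x⟫_ℝ} →
      ((0 : EuclideanSpace ℝ (Fin n)) ∈
        intrinsicInterior ℝ ({x | (subdiffOn Ω φ x).Nonempty} -
          {x | x ∈ Ω ∧ ∀ y ∈ Ω, 0 ≤ ⟪F x, y - x⟫_ℝ})) →
      (∃ γ : ℝ, 0 < γ ∧ ∀ x₀ ∈ Ω, ∃ c : ℝ, 0 < c ∧ ∃ R : ℝ,
        ∀ x ∈ Ω, R ≤ ‖x‖ → c ≤ ⟪F x, x - x₀⟫_ℝ / ‖x‖ ^ γ) →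
      ∀ ε : ℝ, 0 < ε → ε ≤ 1 / lam →
        {x | (x ∈ Ω ∧ ∀ y ∈ Ω, 0 ≤ ⟪F x, y - x⟫_ℝ) ∧
          ∃ v ∈ subdiffOn Ω φ x,
            ∀ z, (z ∈ Ω ∧ ∀ y ∈ Ω, 0 ≤ ⟪F z, y - z⟫_ℝ) → 0 ≤ ⟪v, z - x⟫_ℝ} =
        ({x | x ∈ Ω ∧ ∀ y ∈ Ω, 0 ≤ ⟪F x, y - x⟫_ℝ} ∩
          {x | x ∈ Ω ∧ ∀ z ∈ Ω, dualGap Ω F x + ((ε * φ x : ℝ) : EReal) ≤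
            dualGap Ω F z + ((ε * φ z : ℝ) : EReal)})) := by
  obtain ⟨⟨hxbΩ, hxbsol⟩, v, hv, hvmin⟩ := hxbar
  obtain ⟨a, ha, b, hb, c, hc, heq⟩ := hlagrange
  -- key inner-product rewriting: ⟪u, y - x⟫ = ⟪u, y - xbar⟫ - ⟪u, x - xbar⟫
  have key : ∀ (u x y : EuclideanSpace ℝ (Fin n)),
      ⟪u, y - x⟫_ℝ = ⟪u, y - xbar⟫_ℝ - ⟪u, x - xbar⟫_ℝ := by
    intro u x y
    rw [← inner_sub_right, sub_sub_sub_cancel_right]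
  constructor
  · -- λ = 0 case
    intro hlam0 ε hε
    subst hlam0
    simp only [zero_smul, add_zero] at heq
    -- from a + c = 0 : ⟪a, z - xbar⟫ ≥ 0 for all z ∈ Ω
    have haN : ∀ z ∈ Ω, 0 ≤ ⟪a, z - xbar⟫_ℝ := by
      intro z hz
      have hc' := hc z hz
      have : a = -c := by
        have := heq
        linear_combination (norm := module) this
      rw [this, inner_neg_left]
      linarith
    ext x
    constructor
    · rintro ⟨⟨hxΩ, hxsol⟩, -, w, hw, hwε⟩
      have hkey : ∀ z, (z ∈ Ω ∧ ∀ y ∈ Ω, 0 ≤ ⟪F z, y - z⟫_ℝ) → 0 ≤ ⟪w, z - x⟫_ℝ := by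
        rintro z ⟨hzΩ, hzsol⟩
        have hm := hFmono x hxΩ z hzΩ
        have h1 := hxsol z hzΩ
        have h2 := hzsol x hxΩ
        have hFx0 : ⟪F x, z - x⟫_ℝ = 0 := by
          simp only [inner_sub_left, inner_sub_right] at hm h1 h2 ⊢
          linarith
        have h3 := hwε z hzΩ
        rw [inner_add_left, hFx0, real_inner_smul_left] at h3
        nlinarith
      exact ⟨⟨hxΩ, hxsol⟩, w, hw, hkey⟩
    · rintro ⟨⟨hxΩ, hxsol⟩, w, hw, hwmin⟩
      -- φ x = φ xbar
      have h1 : φ x ≤ φ xbar := by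
        have := hw.2 xbar hxbΩ
        have := hwmin xbar ⟨hxbΩ, hxbsol⟩
        linarith
      have h2 : φ xbar ≤ φ x := by
        have := ha.2 x hxΩ
        have := haN x hxΩ
        linarith
      have haxx : ⟪a, x - xbar⟫_ℝ = 0 := by
        have := ha.2 x hxΩ
        have := haN x hxΩ
        linarith
      refine ⟨⟨hxΩ, hxsol⟩, hxΩ, a, ⟨hxΩ, ?_⟩, ?_⟩
      · intro y hy
        have := ha.2 y hy
        rw [key a x y]
        linarith
      · intro z hz
        have h3 := hxsol z hz
        have h4 := haN z hz
        rw [inner_add_left, real_inner_smul_left, key a x z, haxx]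
        nlinarith
  · -- λ > 0 case
    intro hlampos _ _ _ _ ε hε hεlam
    have Gxb : dualGap Ω F xbar = 0 := gap_zero hFmono hxbΩ hxbsol
    have hεlam' : ε * lam ≤ 1 := by
      rw [le_div_iff₀ hlampos] at hεlam
      linarith
    ext x
    constructor
    · rintro ⟨⟨hxΩ, hxsol⟩, w, hw, hwmin⟩
      have Gx : dualGap Ω F x = 0 := gap_zero hFmono hxΩ hxsol
      have hφeq : φ x = φ xbar := by
        have e1 := hw.2 xbar hxbΩ
        have e2 := hwmin xbar ⟨hxbΩ, hxbsol⟩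
        have e3 := hv.2 x hxΩ
        have e4 := hvmin x ⟨hxΩ, hxsol⟩
        linarith
      refine ⟨⟨hxΩ, hxsol⟩, hxΩ, ?_⟩
      intro z hz
      rw [Gx, zero_add]
      set t : ℝ := ⟪b, z - xbar⟫_ℝ with ht
      have hbz : (t : EReal) ≤ dualGap Ω F z := by
        have := hb z
        rwa [Gxb, zero_add] at this
      have hGz : (0 : EReal) ≤ dualGap Ω F z := gap_nonneg hz
      -- real inequality
      have hinner : ⟪a, z - xbar⟫_ℝ + lam * t + ⟪c, z - xbar⟫_ℝ = 0 := by
        have h0 : ⟪a + lam • b + c, z - xbar⟫_ℝ = 0 := by rw [heq]; simp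
        rw [inner_add_left, inner_add_left, real_inner_smul_left] at h0
        linarith
      have haz := ha.2 z hz
      have hcz := hc z hz
      have hreal : ε * φ xbar ≤ max t 0 + ε * φ z := by
        have h5 : -(lam * t) ≤ ⟪a, z - xbar⟫_ℝ := by linarith
        have h6 : ε * lam * t ≤ max t 0 := by
          rcases le_total t 0 with h | h
          · have : ε * lam * t ≤ 0 := mul_nonpos_of_nonneg_of_nonpos (by positivity) h
            simpa [max_eq_right h] using this
          · calc ε * lam * t ≤ 1 * t := by nlinarith
            _ = t := one_mul t
            _ ≤ max t 0 := le_max_left t 0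
        nlinarith
      have hmax : ((max t 0 : ℝ) : EReal) ≤ dualGap Ω F z := by
        rcases le_total t 0 with h | h
        · simpa [max_eq_right h] using hGz
        · simpa [max_eq_left h] using hbz
      calc ((ε * φ x : ℝ) : EReal) = ((ε * φ xbar : ℝ) : EReal) := by rw [hφeq]
        _ ≤ ((max t 0 + ε * φ z : ℝ) : EReal) := EReal.coe_le_coe_iff.mpr hreal
        _ = ((max t 0 : ℝ) : EReal) + ((ε * φ z : ℝ) : EReal) := by
            rw [EReal.coe_add]
        _ ≤ dualGap Ω F z + ((ε * φ z : ℝ) : EReal) := add_le_add_left hmax _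
    · rintro ⟨⟨hxΩ, hxsol⟩, -, hmin⟩
      have Gx : dualGap Ω F x = 0 := gap_zero hFmono hxΩ hxsol
      -- x minimizes φ over S₀
      have hφmin : ∀ z, (z ∈ Ω ∧ ∀ y ∈ Ω, 0 ≤ ⟪F z, y - z⟫_ℝ) → φ x ≤ φ z := by
        rintro z ⟨hzΩ, hzsol⟩
        have Gz : dualGap Ω F z = 0 := gap_zero hFmono hzΩ hzsol
        have := hmin z hzΩ
        rw [Gx, Gz, zero_add, zero_add] at this
        have := EReal.coe_le_coe_iff.mp this
        nlinarith
      have h1 : φ x ≤ φ xbar := hφmin xbar ⟨hxbΩ, hxbsol⟩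
      have h2 : φ xbar ≤ φ x := by
        have := hv.2 x hxΩ
        have := hvmin x ⟨hxΩ, hxsol⟩
        linarith
      have hvxx : ⟪v, x - xbar⟫_ℝ = 0 := by
        have := hv.2 x hxΩ
        have := hvmin x ⟨hxΩ, hxsol⟩
        linarith
      refine ⟨⟨hxΩ, hxsol⟩, v, ⟨hxΩ, ?_⟩, ?_⟩
      · intro y hy
        have := hv.2 y hy
        rw [key v x y, hvxx]
        linarith
      · rintro z hz
        have := hvmin z hz
        rw [key v x z, hvxx]
        linarith
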